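/- Let φ : ℝⁿ → [0,∞) be a G-function and let u ∈ W^{1,φ}_T([0,T], ℝⁿ), i.e., u is absolutely continuous with u(0) = u(T). Write ū = (1/T)∫₀ᵀ u and ũ = u − ū. Then for every t ∈ [0,T], φ(ũ(t)) ≤ (1/T) ∫₀ᵀ φ(T u′(r)) dr. -/

import Mathlib

open MeasureTheory Set intervalIntegral

/-- `φ` is a G-function. -/
structure IsGFunction {n : ℕ} (φ : EuclideanSpace ℝ (Fin n) → ℝ) : Prop where
  nonneg : ∀ x, 0 ≤ φ x
  convexOn : ConvexOn ℝ Set.univ φ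
  even : ∀ x, φ (-x) = φ x
  lsc : LowerSemicontinuous φ
  zero : φ 0 = 0
  bddNearZero : ∃ ε > (0:ℝ), ∃ M : ℝ, ∀ x, ‖x‖ < ε → φ x ≤ M
  tendsto_infty : ∀ M : ℝ, ∃ R : ℝ, ∀ x, R < ‖x‖ → M ≤ φ x

theorem stmt_6 (n : ℕ) (φ : EuclideanSpace ℝ (Fin n) → ℝ) (hG : IsGFunction φ)
    (T : ℝ) (hT : 0 < T)
    (u u' : ℝ → EuclideanSpace ℝ (Fin n))
    (hu'int : IntervalIntegrable u' MeasureTheory.volume 0 T)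
    (hAC : ∀ t ∈ Icc (0:ℝ) T, u t = u 0 + ∫ s in (0:ℝ)..t, u' s)
    (hper : u 0 = u T)
    (ubar : EuclideanSpace ℝ (Fin n))
    (hubar : ubar = (T⁻¹ : ℝ) • ∫ t in (0:ℝ)..T, u t) :
    ∀ t ∈ Icc (0:ℝ) T,
      ENNReal.ofReal (φ (u t - ubar)) ≤
        ENNReal.ofReal (T⁻¹) *
          ∫⁻ r in Ioc (0:ℝ) T, ENNReal.ofReal (φ (T • u' r)) := by
  intro t ht
  set μ := MeasureTheory.volume.restrict (Ioc (0:ℝ) T) with hμdef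
  have hTne : T ≠ 0 := ne_of_gt hT
  have hu'L1 : Integrable u' μ := hu'int.1
  have hu'μ : AEStronglyMeasurable u' μ := hu'L1.1
  have hμuniv : (μ Set.univ).toReal = T := by
    simp [hμdef, Measure.restrict_apply_univ, Real.volume_Ioc, ENNReal.toReal_ofReal hT.le]
  haveI : NeZero μ := by
    refine ⟨Measure.measure_univ_ne_zero.mp ?_⟩
    intro h
    rw [h] at hμuniv
    simp at hμuniv
    exact hTne hμuniv.symm
  -- continuity of φ
  have hφcont : Continuous φ := by
    exact continuousOn_univ.mp (hG.convexOn.continuousOn isOpen_univ)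
  -- convexity bound: |a| ≤ 1 → φ (a • x) ≤ φ x
  have key : ∀ (a : ℝ) (x : EuclideanSpace ℝ (Fin n)), |a| ≤ 1 → φ (a • x) ≤ φ x := by
    intro a x ha
    obtain ⟨ha1, ha2⟩ := abs_le.mp ha
    have h1 : (0:ℝ) ≤ (1 + a) / 2 := by linarith
    have h2 : (0:ℝ) ≤ (1 - a) / 2 := by linarith
    have hsum : (1 + a)/2 + (1 - a)/2 = 1 := by ring
    have hc := hG.convexOn.2 (mem_univ x) (mem_univ (-x)) h1 h2 hsum
    have heq : ((1+a)/2) • x + ((1-a)/2) • (-x) = a • x := by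
      rw [smul_neg, ← sub_eq_add_neg, ← sub_smul]
      congr 1; ring
    rw [heq] at hc
    calc φ (a • x) ≤ ((1+a)/2) * φ x + ((1-a)/2) * φ (-x) := hc
      _ = φ x := by rw [hG.even]; ring
  -- Fubini: ∫ (u s - u 0) = ∫ (T - r) • u' r
  have hinner1 : ∀ s ∈ Icc (0:ℝ) T,
      (∫ r, (if r ≤ s then u' r else 0) ∂μ) = ∫ r in Ioc (0:ℝ) s, u' r := by
    intro s hs
    have hind : (fun r => if r ≤ s then u' r else 0) = (Iic s).indicator u' := by
      funext r; simp [Set.indicator, Set.mem_Iic]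
    have hset : Iic s ∩ Ioc (0:ℝ) T = Ioc 0 s := by
      ext r
      simp only [mem_inter_iff, mem_Iic, mem_Ioc]
      constructor
      · rintro ⟨h1, h2, _⟩; exact ⟨h2, h1⟩
      · rintro ⟨h1, h2⟩; exact ⟨h2, h1, h2.trans hs.2⟩
    rw [hind, MeasureTheory.integral_indicator measurableSet_Iic, hμdef,
      Measure.restrict_restrict measurableSet_Iic, hset]
  have hinner2 : ∀ r ∈ Ioc (0:ℝ) T,
      (∫ s, (if r ≤ s then u' r else 0) ∂μ) = (T - r) • u' r := by
    intro r hr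
    have hind : (fun s => if r ≤ s then u' r else 0)
        = (Ici r).indicator (fun _ => u' r) := by
      funext s; simp [Set.indicator, Set.mem_Ici]
    rw [hind, MeasureTheory.integral_indicator_const _ measurableSet_Ici, hμdef,
      measureReal_def, Measure.restrict_apply measurableSet_Ici]
    have hIcc : Ici r ∩ Ioc (0:ℝ) T = Icc r T := by
      ext s
      simp only [mem_inter_iff, mem_Ici, mem_Ioc, mem_Icc]
      constructor
      · rintro ⟨h1, _, h3⟩; exact ⟨h1, h3⟩
      · rintro ⟨h1, h2⟩; exact ⟨h1, lt_of_lt_of_le hr.1 h1, h2⟩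
    rw [hIcc, Real.volume_Icc, ENNReal.toReal_ofReal (by linarith [hr.2])]
  have hFmeas : AEStronglyMeasurable
      (Function.uncurry fun s r => if r ≤ s then u' r else 0) (μ.prod μ) := by
    have h1 : AEStronglyMeasurable (fun p : ℝ × ℝ => u' p.2) (μ.prod μ) := hu'μ.comp_snd
    have hind : (Function.uncurry fun s r => if r ≤ s then u' r else 0)
        = {p : ℝ × ℝ | p.2 ≤ p.1}.indicator (fun p => u' p.2) := by
      funext p; simp [Function.uncurry, Set.indicator, Set.mem_setOf_eq]
    rw [hind]
    exact h1.indicator (measurableSet_le measurable_snd measurable_fst)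
  have hFint : Integrable (Function.uncurry fun s r => if r ≤ s then u' r else 0)
      (μ.prod μ) := by
    rw [integrable_prod_iff hFmeas]
    constructor
    · refine ae_of_all _ fun s => ?_
      have hind : (fun r => if r ≤ s then u' r else 0) = (Iic s).indicator u' := by
        funext r; simp [Set.indicator, Set.mem_Iic]
      show Integrable (fun r => if r ≤ s then u' r else 0) μ
      rw [hind]
      exact hu'L1.indicator measurableSet_Iic
    · refine Integrable.mono' (integrable_const (∫ r, ‖u' r‖ ∂μ))
        hFmeas.norm.integral_prod_right' (ae_of_all _ fun s => ?_)
      have h0 : 0 ≤ ∫ r, ‖Function.uncurry (fun s r => if r ≤ s then u' r else 0) (s, r)‖ ∂μ :=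
        MeasureTheory.integral_nonneg fun r => norm_nonneg _
      rw [Real.norm_eq_abs, abs_of_nonneg h0]
      refine MeasureTheory.integral_mono_of_nonneg (ae_of_all _ fun r => norm_nonneg _) hu'L1.norm
        (ae_of_all _ fun r => ?_)
      by_cases h : r ≤ s <;> simp [Function.uncurry, h]
  have hswap := MeasureTheory.integral_integral_swap hFint
  have hL : (∫ s, (u s - u 0) ∂μ)
      = ∫ s, ∫ r, (if r ≤ s then u' r else 0) ∂μ ∂μ := by
    refine MeasureTheory.integral_congr_ae ?_
    filter_upwards [ae_restrict_mem measurableSet_Ioc] with s hs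
    rw [hinner1 s ⟨hs.1.le, hs.2⟩, hAC s ⟨hs.1.le, hs.2⟩,
      intervalIntegral.integral_of_le hs.1.le, add_sub_cancel_left]
  have hR : (∫ r, ∫ s, (if r ≤ s then u' r else 0) ∂μ ∂μ)
      = ∫ r, (T - r) • u' r ∂μ := by
    refine MeasureTheory.integral_congr_ae ?_
    filter_upwards [ae_restrict_mem measurableSet_Ioc] with r hr
    exact hinner2 r hr
  have hfub : (∫ s, (u s - u 0) ∂μ) = ∫ r, (T - r) • u' r ∂μ := by
    rw [hL, hswap, hR]
  have husubint : Integrable (fun s => u s - u 0) μ := by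
    have h1 := hFint.integral_prod_left
    refine h1.congr ?_
    filter_upwards [ae_restrict_mem measurableSet_Ioc] with s hs
    simp only [Function.uncurry_apply_pair]
    rw [hinner1 s ⟨hs.1.le, hs.2⟩, hAC s ⟨hs.1.le, hs.2⟩,
      intervalIntegral.integral_of_le hs.1.le, add_sub_cancel_left]
  -- expression for ubar
  have hubar' : ubar = u 0 + (T⁻¹ : ℝ) • ∫ r, (T - r) • u' r ∂μ := by
    have h1 : (∫ s, u s ∂μ) = (∫ s, (u s - u 0) ∂μ) + T • u 0 := by
      calc (∫ s, u s ∂μ) = ∫ s, ((u s - u 0) + u 0) ∂μ := by simp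
        _ = (∫ s, (u s - u 0) ∂μ) + ∫ _, u 0 ∂μ :=
            MeasureTheory.integral_add husubint (integrable_const _)
        _ = (∫ s, (u s - u 0) ∂μ) + T • u 0 := by
            rw [MeasureTheory.integral_const, measureReal_def, hμuniv]
    rw [hubar, intervalIntegral.integral_of_le hT.le, ← hμdef, h1, hfub, smul_add,
      smul_smul, inv_mul_cancel₀ hTne, one_smul]
    exact add_comm _ _
  -- integrability facts
  have hInt3 : Integrable (fun r => (r - T) • u' r) μ := by
    refine Integrable.mono' (hu'L1.norm.const_mul T)
      (((continuous_id.sub continuous_const).aestronglyMeasurable).smul hu'μ)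
      ?_
    filter_upwards [ae_restrict_mem measurableSet_Ioc] with r hr
    rw [norm_smul, Real.norm_eq_abs]
    have : |r - T| ≤ T := by
      rw [abs_le]; constructor <;> [linarith [hr.1]; linarith [hr.2]]
    exact mul_le_mul_of_nonneg_right this (norm_nonneg _)
  have hTu'int : Integrable (fun r => T • u' r) μ := hu'L1.smul T
  have hindint : Integrable ((Ioc (0:ℝ) t).indicator (fun x => T • u' x)) μ :=
    hTu'int.indicator measurableSet_Ioc
  -- the weight function
  set w : ℝ → ℝ := fun r => if r ≤ t then r else r - T with hwdef
  have hwmeas : Measurable w := by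
    apply Measurable.ite measurableSet_Iic measurable_id
    exact measurable_id.sub measurable_const
  have hfmeas : AEStronglyMeasurable (fun r => w r • u' r) μ :=
    (hwmeas.aestronglyMeasurable).smul hu'μ
  have hwbound : ∀ r ∈ Ioc (0:ℝ) T, |w r| ≤ T := by
    intro r hr
    rw [hwdef]
    by_cases h : r ≤ t <;> simp only [h, if_true, if_false]
    · rw [abs_of_nonneg hr.1.le]; exact hr.2
    · rw [abs_of_nonpos (by linarith [hr.2])]; linarith [hr.1]
  have hfint : Integrable (fun r => w r • u' r) μ := by
    refine Integrable.mono' (hu'L1.norm.const_mul T) hfmeas ?_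
    filter_upwards [ae_restrict_mem measurableSet_Ioc] with r hr
    rw [norm_smul, Real.norm_eq_abs]
    exact mul_le_mul_of_nonneg_right (hwbound r hr) (norm_nonneg _)
  -- the main identity
  have hIDmain : u t - ubar = (T⁻¹ : ℝ) • ∫ r, w r • u' r ∂μ := by
    have heq : (fun r => w r • u' r) =ᵐ[μ]
        fun r => (r - T) • u' r + (Ioc (0:ℝ) t).indicator (fun x => T • u' x) r := by
      filter_upwards [ae_restrict_mem measurableSet_Ioc] with r hr
      rw [hwdef]
      by_cases h : r ≤ t
      · have hmem : r ∈ Ioc (0:ℝ) t := ⟨hr.1, h⟩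
        simp only [h, if_true, Set.indicator_of_mem hmem]
        rw [← add_smul]; congr 1; ring
      · simp only [h, if_false,
          Set.indicator_of_notMem (fun hc : r ∈ Ioc (0:ℝ) t => h hc.2), add_zero]
    have hIoct : (∫ r, (Ioc (0:ℝ) t).indicator (fun x => T • u' x) r ∂μ)
        = T • ∫ r in Ioc (0:ℝ) t, u' r := by
      rw [MeasureTheory.integral_indicator measurableSet_Ioc, hμdef,
        Measure.restrict_restrict measurableSet_Ioc,
        Set.inter_eq_left.mpr (Ioc_subset_Ioc_right ht.2), MeasureTheory.integral_smul]
    have hneg : (∫ r, (r - T) • u' r ∂μ) = -∫ r, (T - r) • u' r ∂μ := by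
      rw [← MeasureTheory.integral_neg]
      congr 1; funext r; rw [← neg_smul, neg_sub]
    rw [MeasureTheory.integral_congr_ae heq, MeasureTheory.integral_add hInt3 hindint, hIoct, hneg,
      hAC t ht, hubar', intervalIntegral.integral_of_le ht.1]
    rw [smul_add, smul_neg, smul_smul, inv_mul_cancel₀ hTne, one_smul]
    abel
  -- bound φ (w r • u' r) ≤ φ (T • u' r)
  have hptwise : ∀ r ∈ Ioc (0:ℝ) T, φ (w r • u' r) ≤ φ (T • u' r) := by
    intro r hr
    have h1 : w r • u' r = (w r / T) • (T • u' r) := by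
      rw [smul_smul, div_mul_cancel₀ _ hTne]
    rw [h1]
    refine key _ _ ?_
    rw [abs_div, abs_of_pos hT, div_le_one hT]
    exact hwbound r hr
  -- case on finiteness of the lintegral
  by_cases hI : (∫⁻ r in Ioc (0:ℝ) T, ENNReal.ofReal (φ (T • u' r))) = ⊤
  · rw [hI, ENNReal.mul_top (by
      simp only [ne_eq, ENNReal.ofReal_eq_zero, not_le]
      exact inv_pos.mpr hT)]
    exact le_top
  · have hφTmeas : AEStronglyMeasurable (fun r => φ (T • u' r)) μ :=
      hφcont.comp_aestronglyMeasurable (hu'μ.const_smul T)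
    have hφTint : Integrable (fun r => φ (T • u' r)) μ :=
      ⟨hφTmeas, (hasFiniteIntegral_iff_ofReal (ae_of_all _ fun r => hG.nonneg _)).mpr
        (lt_top_iff_ne_top.mpr hI)⟩
    have hφfmeas : AEStronglyMeasurable (fun r => φ (w r • u' r)) μ :=
      hφcont.comp_aestronglyMeasurable hfmeas
    have hφfint : Integrable (fun r => φ (w r • u' r)) μ := by
      refine Integrable.mono' hφTint hφfmeas ?_
      filter_upwards [ae_restrict_mem measurableSet_Ioc] with r hr
      rw [Real.norm_eq_abs, abs_of_nonneg (hG.nonneg _)]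
      exact hptwise r hr
    -- Jensen
    have hJ : φ (⨍ r, w r • u' r ∂μ) ≤ ⨍ r, φ (w r • u' r) ∂μ :=
      hG.convexOn.map_average_le hφcont.continuousOn isClosed_univ
        (ae_of_all _ fun _ => mem_univ _) hfint hφfint
    have havg : (⨍ r, w r • u' r ∂μ) = u t - ubar := by
      rw [average_eq, measureReal_def, hμuniv, hIDmain]
    have h2 : (⨍ r, φ (w r • u' r) ∂μ) ≤ T⁻¹ * ∫ r, φ (T • u' r) ∂μ := by
      rw [average_eq, measureReal_def, hμuniv, smul_eq_mul]
      refine mul_le_mul_of_nonneg_left ?_ (inv_nonneg.mpr hT.le)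
      refine MeasureTheory.integral_mono_ae hφfint hφTint ?_
      filter_upwards [ae_restrict_mem measurableSet_Ioc] with r hr
      exact hptwise r hr
    have h3 : φ (u t - ubar) ≤ T⁻¹ * ∫ r, φ (T • u' r) ∂μ := by
      rw [← havg]; exact le_trans hJ h2
    calc ENNReal.ofReal (φ (u t - ubar))
        ≤ ENNReal.ofReal (T⁻¹ * ∫ r, φ (T • u' r) ∂μ) := ENNReal.ofReal_le_ofReal h3
      _ = ENNReal.ofReal T⁻¹ * ENNReal.ofReal (∫ r, φ (T • u' r) ∂μ) :=
          ENNReal.ofReal_mul (inv_nonneg.mpr hT.le)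
      _ = ENNReal.ofReal T⁻¹ * ∫⁻ r in Ioc (0:ℝ) T, ENNReal.ofReal (φ (T • u' r)) := by
          rw [MeasureTheory.ofReal_integral_eq_lintegral_ofReal hφTint
            (ae_of_all _ fun r => hG.nonneg _)]
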